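/- Let b > 10⁴ be real. Let (Ω, F, P) be a probability space with a filtration (F_n)_{n≥0}, and let (V_n)_{n≥1} be a sequence of random variables such that V_n is F_n-measurable, V_n takes values in {-2, -1, 1}, and almost surely P(V_n = -2 | F_{n-1}) ≤ 2/(2+b) and P(V_n = -1 | F_{n-1}) ≤ 2/(2+b). Then for every integer w ≥ 2 and every integer n ≥ 1, P(there exists l ≥ n with V_1 + V_2 + ⋯ + V_l ≤ 2 - w) ≤ 4^{2-w} · 2^{1-n}. -/

import Mathlib

open MeasureTheory

noncomputable def auxW {Ω : Type*} (V : ℕ → Ω → ℝ) (i : ℕ) (ω : Ω) : ℝ :=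
  1/4 + (63/4) * Set.indicator {ω | V i ω = -2} (fun _ => (1:ℝ)) ω
      + (15/4) * Set.indicator {ω | V i ω = -1} (fun _ => (1:ℝ)) ω

noncomputable def auxY {Ω : Type*} (V : ℕ → Ω → ℝ) (l : ℕ) (ω : Ω) : ℝ :=
  ∏ i ∈ Finset.Icc 1 l, auxW V i ω

lemma auxW_nonneg {Ω : Type*} (V : ℕ → Ω → ℝ) (i : ℕ) (ω : Ω) : 0 ≤ auxW V i ω := by
  unfold auxW
  simp only [Set.indicator_apply]
  split_ifs <;> norm_num

lemma auxW_le {Ω : Type*} (V : ℕ → Ω → ℝ) (i : ℕ) (ω : Ω) : auxW V i ω ≤ 16 := by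
  unfold auxW
  simp only [Set.indicator_apply]
  split_ifs with p q
  · simp only [Set.mem_setOf_eq] at p q
    rw [p] at q; norm_num at q
  · norm_num
  · norm_num
  · norm_num

lemma auxY_nonneg {Ω : Type*} (V : ℕ → Ω → ℝ) (l : ℕ) (ω : Ω) : 0 ≤ auxY V l ω :=
  Finset.prod_nonneg fun i _ => auxW_nonneg V i ω

lemma auxY_le {Ω : Type*} (V : ℕ → Ω → ℝ) (l : ℕ) (ω : Ω) : auxY V l ω ≤ 16 ^ l := by
  have h := Finset.prod_le_prod (s := Finset.Icc 1 l) (f := fun i => auxW V i ω)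
    (g := fun _ => (16:ℝ)) (fun i _ => auxW_nonneg V i ω) (fun i _ => auxW_le V i ω)
  rw [Finset.prod_const, Nat.card_Icc, Nat.add_sub_cancel] at h
  exact h

/-- key pull-out bound: for nonnegative bounded `m`-measurable `Y` and a set with
conditional probability at most `c`, `∫ Y·1_A ≤ c ∫ Y`. -/
lemma aux_cond_bound {Ω : Type*} {mΩ : MeasurableSpace Ω} (P : Measure Ω) [IsProbabilityMeasure P]
    {m : MeasurableSpace Ω} (hm : m ≤ mΩ) {Y : Ω → ℝ} (hY : StronglyMeasurable[m] Y)
    (hY0 : ∀ ω, 0 ≤ Y ω) {C : ℝ} (hYC : ∀ ω, Y ω ≤ C)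
    {A : Set Ω} (hInd : Integrable (A.indicator fun _ => (1:ℝ)) P) {c : ℝ}
    (hcond : ∀ᵐ ω ∂P, (P[A.indicator (fun _ => (1:ℝ)) | m]) ω ≤ c) :
    ∫ ω, Y ω * A.indicator (fun _ => (1:ℝ)) ω ∂P ≤ c * ∫ ω, Y ω ∂P := by
  have hYae : AEStronglyMeasurable[mΩ] Y P := (hY.mono hm).aestronglyMeasurable
  have hbdd : ∃ C', ∀ ω, ‖Y ω‖ ≤ C' := ⟨C, fun ω => by
    rw [Real.norm_eq_abs, abs_of_nonneg (hY0 ω)]; exact hYC ω⟩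
  have hmul : Integrable (fun ω => Y ω * A.indicator (fun _ => (1:ℝ)) ω) P :=
    hInd.bdd_mul hYae (Filter.Eventually.of_forall hbdd.choose_spec)
  have hYI : Integrable Y P := by
    have := (integrable_const (1:ℝ)).bdd_mul hYae (Filter.Eventually.of_forall hbdd.choose_spec)
    simpa using this
  have hcm : Integrable (fun ω => Y ω * (P[A.indicator (fun _ => (1:ℝ)) | m]) ω) P :=
    integrable_condExp.bdd_mul hYae (Filter.Eventually.of_forall hbdd.choose_spec)
  have hpull : P[Y * A.indicator (fun _ => (1:ℝ)) | m]
      =ᵐ[P] Y * P[A.indicator (fun _ => (1:ℝ)) | m] :=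
    condExp_mul_of_stronglyMeasurable_left hY (by exact hmul) hInd
  calc ∫ ω, Y ω * A.indicator (fun _ => (1:ℝ)) ω ∂P
      = ∫ ω, (P[Y * A.indicator (fun _ => (1:ℝ)) | m]) ω ∂P := (integral_condExp hm).symm
    _ = ∫ ω, Y ω * (P[A.indicator (fun _ => (1:ℝ)) | m]) ω ∂P := by
        refine integral_congr_ae ?_
        filter_upwards [hpull] with ω hω using hω
    _ ≤ ∫ ω, Y ω * c ∂P := by
        refine integral_mono_ae hcm (hYI.mul_const c) ?_
        filter_upwards [hcond] with ω hω
        exact mul_le_mul_of_nonneg_left hω (hY0 ω)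
    _ = c * ∫ ω, Y ω ∂P := by rw [integral_mul_const]; ring

theorem large_deviation_estimate_summed
    {Ω : Type*} {mΩ : MeasurableSpace Ω} (P : Measure Ω) [IsProbabilityMeasure P]
    (ℱ : Filtration ℕ mΩ) (b : ℝ) (hb : b > 10^4)
    (V : ℕ → Ω → ℝ)
    (hmeas : ∀ n, 1 ≤ n → StronglyMeasurable[ℱ n] (V n))
    (hrange : ∀ n, 1 ≤ n → ∀ ω, V n ω = -2 ∨ V n ω = -1 ∨ V n ω = 1)
    (h2 : ∀ n, 1 ≤ n → ∀ᵐ ω ∂P,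
      (P[Set.indicator {ω | V n ω = -2} (fun _ => (1 : ℝ)) | ℱ (n - 1)]) ω ≤ 2 / (2 + b))
    (h1 : ∀ n, 1 ≤ n → ∀ᵐ ω ∂P,
      (P[Set.indicator {ω | V n ω = -1} (fun _ => (1 : ℝ)) | ℱ (n - 1)]) ω ≤ 2 / (2 + b))
    (w : ℕ) (hw : 2 ≤ w) (n : ℕ) (hn : 1 ≤ n) :
    P {ω | ∃ l, n ≤ l ∧ ∑ i ∈ Finset.Icc 1 l, V i ω ≤ 2 - (w : ℝ)} ≤
      ENNReal.ofReal ((4 : ℝ) ^ ((2 : ℤ) - (w : ℤ)) * (2 : ℝ) ^ (1 - (n : ℤ))) := by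
  have hb2 : (0:ℝ) < 2 + b := by norm_num at hb ⊢; linarith
  -- measurability of the basic sets
  have hA2 : ∀ i, 1 ≤ i → MeasurableSet[ℱ i] {ω | V i ω = -2} := fun i hi =>
    (hmeas i hi).measurable (measurableSet_singleton (-2))
  have hA1 : ∀ i, 1 ≤ i → MeasurableSet[ℱ i] {ω | V i ω = -1} := fun i hi =>
    (hmeas i hi).measurable (measurableSet_singleton (-1))
  have hWmeas : ∀ i, 1 ≤ i → StronglyMeasurable[ℱ i] (auxW V i) := by
    intro i hi
    exact ((stronglyMeasurable_const.add
      (stronglyMeasurable_const.mul (stronglyMeasurable_const.indicator (hA2 i hi)))).add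
      (stronglyMeasurable_const.mul (stronglyMeasurable_const.indicator (hA1 i hi))))
  have hYmeas : ∀ l, StronglyMeasurable[ℱ l] (auxY V l) := by
    intro l
    rw [show auxY V l = ∏ i ∈ Finset.Icc 1 l, auxW V i from
      funext fun ω => (Finset.prod_apply ω _ _).symm]
    exact Finset.stronglyMeasurable_prod (Finset.Icc 1 l)
      (fun i hi => (hWmeas i (Finset.mem_Icc.mp hi).1).mono (ℱ.mono (Finset.mem_Icc.mp hi).2))
  have hYI : ∀ l, Integrable (auxY V l) P := by
    intro l
    refine (integrable_const ((16:ℝ) ^ l)).mono'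
      ((hYmeas l).mono (ℱ.le l)).aestronglyMeasurable ?_
    filter_upwards with ω
    rw [Real.norm_eq_abs, abs_of_nonneg (auxY_nonneg V l ω)]
    exact auxY_le V l ω
  -- recursion
  have hrec : ∀ l : ℕ, ∫ ω, auxY V (l+1) ω ∂P ≤ (1/2) * ∫ ω, auxY V l ω ∂P := by
    intro l
    have hl1 : 1 ≤ l + 1 := Nat.le_add_left 1 l
    have hsplit : ∀ ω, auxY V (l+1) ω = auxY V l ω * auxW V (l+1) ω := by
      intro ω
      exact Finset.prod_Icc_succ_top hl1 _
    have hI2int : Integrable (fun ω => auxY V l ω *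
        Set.indicator {ω | V (l+1) ω = -2} (fun _ => (1:ℝ)) ω) P := by
      refine ((integrable_const 1).indicator ((ℱ.le (l+1)) _ (hA2 (l+1) hl1))).bdd_mul
        ((hYmeas l).mono (ℱ.le l)).aestronglyMeasurable (c := 16 ^ l) (Filter.Eventually.of_forall fun ω => ?_)
      rw [Real.norm_eq_abs, abs_of_nonneg (auxY_nonneg V l ω)]
      exact auxY_le V l ω
    have hI1int : Integrable (fun ω => auxY V l ω *
        Set.indicator {ω | V (l+1) ω = -1} (fun _ => (1:ℝ)) ω) P := by
      refine ((integrable_const 1).indicator ((ℱ.le (l+1)) _ (hA1 (l+1) hl1))).bdd_mul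
        ((hYmeas l).mono (ℱ.le l)).aestronglyMeasurable (c := 16 ^ l) (Filter.Eventually.of_forall fun ω => ?_)
      rw [Real.norm_eq_abs, abs_of_nonneg (auxY_nonneg V l ω)]
      exact auxY_le V l ω
    have e1 : ∫ ω, auxY V (l+1) ω ∂P
        = (1/4) * ∫ ω, auxY V l ω ∂P
          + ((63/4) * ∫ ω, auxY V l ω * Set.indicator {ω | V (l+1) ω = -2} (fun _ => (1:ℝ)) ω ∂P
          + (15/4) * ∫ ω, auxY V l ω * Set.indicator {ω | V (l+1) ω = -1} (fun _ => (1:ℝ)) ω ∂P) := by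
      have hpt : (fun ω => auxY V (l+1) ω)
          = fun ω => (1/4) * auxY V l ω
            + ((63/4) * (auxY V l ω * Set.indicator {ω | V (l+1) ω = -2} (fun _ => (1:ℝ)) ω)
            + (15/4) * (auxY V l ω * Set.indicator {ω | V (l+1) ω = -1} (fun _ => (1:ℝ)) ω)) :=
        funext fun ω => by rw [hsplit ω]; unfold auxW; ring
      calc ∫ ω, auxY V (l+1) ω ∂P
          = ∫ ω, ((1/4) * auxY V l ω
            + ((63/4) * (auxY V l ω * Set.indicator {ω | V (l+1) ω = -2} (fun _ => (1:ℝ)) ω)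
            + (15/4) * (auxY V l ω * Set.indicator {ω | V (l+1) ω = -1} (fun _ => (1:ℝ)) ω))) ∂P := by
            rw [hpt]
        _ = (1/4) * ∫ ω, auxY V l ω ∂P
          + ((63/4) * ∫ ω, auxY V l ω * Set.indicator {ω | V (l+1) ω = -2} (fun _ => (1:ℝ)) ω ∂P
          + (15/4) * ∫ ω, auxY V l ω * Set.indicator {ω | V (l+1) ω = -1} (fun _ => (1:ℝ)) ω ∂P) := by
            have ha1 : Integrable (fun ω => (1/4:ℝ) * auxY V l ω) P := (hYI l).const_mul _
            have ha2 : Integrable (fun ω => (63/4:ℝ) *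
                (auxY V l ω * Set.indicator {ω | V (l+1) ω = -2} (fun _ => (1:ℝ)) ω)) P :=
              hI2int.const_mul _
            have ha3 : Integrable (fun ω => (15/4:ℝ) *
                (auxY V l ω * Set.indicator {ω | V (l+1) ω = -1} (fun _ => (1:ℝ)) ω)) P :=
              hI1int.const_mul _
            have ha4 : Integrable (fun ω => (63/4:ℝ) *
                (auxY V l ω * Set.indicator {ω | V (l+1) ω = -2} (fun _ => (1:ℝ)) ω)
                + (15/4:ℝ) *
                (auxY V l ω * Set.indicator {ω | V (l+1) ω = -1} (fun _ => (1:ℝ)) ω)) P :=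
              ha2.add ha3
            rw [integral_add ha1 ha4, integral_add ha2 ha3,
              integral_const_mul, integral_const_mul, integral_const_mul]
    have hb2' : ∫ ω, auxY V l ω * Set.indicator {ω | V (l+1) ω = -2} (fun _ => (1:ℝ)) ω ∂P
        ≤ (2/(2+b)) * ∫ ω, auxY V l ω ∂P := by
      refine aux_cond_bound P (ℱ.le l) (hYmeas l) (auxY_nonneg V l) (auxY_le V l)
        ((integrable_const 1).indicator ((ℱ.le (l+1)) _ (hA2 (l+1) hl1))) ?_
      simpa using h2 (l+1) hl1
    have hb1' : ∫ ω, auxY V l ω * Set.indicator {ω | V (l+1) ω = -1} (fun _ => (1:ℝ)) ω ∂P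
        ≤ (2/(2+b)) * ∫ ω, auxY V l ω ∂P := by
      refine aux_cond_bound P (ℱ.le l) (hYmeas l) (auxY_nonneg V l) (auxY_le V l)
        ((integrable_const 1).indicator ((ℱ.le (l+1)) _ (hA1 (l+1) hl1))) ?_
      simpa using h1 (l+1) hl1
    have hE0 : 0 ≤ ∫ ω, auxY V l ω ∂P := integral_nonneg (auxY_nonneg V l)
    have hcsmall : 2/(2+b) ≤ 2/10002 := by
      apply div_le_div_of_nonneg_left (by norm_num) (by norm_num)
      norm_num at hb ⊢; linarith
    rw [e1]
    nlinarith [mul_le_mul_of_nonneg_right hcsmall hE0]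
  -- geometric decay of the expectation
  have hgeom : ∀ l : ℕ, ∫ ω, auxY V l ω ∂P ≤ (1/2:ℝ) ^ l := by
    intro l
    induction l with
    | zero =>
      simp only [auxY, Finset.Icc_eq_empty_of_lt (by norm_num : (0:ℕ) < 1), Finset.prod_empty,
        pow_zero]
      simp [integral_const]
    | succ l ih =>
      calc ∫ ω, auxY V (l+1) ω ∂P ≤ (1/2) * ∫ ω, auxY V l ω ∂P := hrec l
        _ ≤ (1/2) * (1/2:ℝ)^l := by linarith
        _ = (1/2:ℝ)^(l+1) := by ring
  -- pointwise identification with 4^{-S_l}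
  have hWeq : ∀ i, 1 ≤ i → ∀ ω, auxW V i ω = (4:ℝ) ^ (-(V i ω)) := by
    intro i hi ω
    rcases hrange i hi ω with h | h | h
    · have h1' : ω ∉ {ω | V i ω = -1} := by norm_num [Set.mem_setOf_eq, h]
      have h2' : ω ∈ {ω | V i ω = -2} := h
      unfold auxW
      rw [Set.indicator_of_mem h2' , Set.indicator_of_notMem h1', h]
      rw [show -(-2:ℝ) = ((2:ℕ):ℝ) by norm_num, Real.rpow_natCast]
      norm_num
    · have h2' : ω ∉ {ω | V i ω = -2} := by norm_num [Set.mem_setOf_eq, h]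
      have h1' : ω ∈ {ω | V i ω = -1} := h
      unfold auxW
      rw [Set.indicator_of_mem h1', Set.indicator_of_notMem h2', h]
      rw [show -(-1:ℝ) = ((1:ℕ):ℝ) by norm_num, Real.rpow_natCast]
      norm_num
    · have h2' : ω ∉ {ω | V i ω = -2} := by norm_num [Set.mem_setOf_eq, h]
      have h1' : ω ∉ {ω | V i ω = -1} := by norm_num [Set.mem_setOf_eq, h]
      unfold auxW
      rw [Set.indicator_of_notMem h2', Set.indicator_of_notMem h1', h]
      rw [show -(1:ℝ) = ((-1 : ℤ):ℝ) by norm_num, Real.rpow_intCast]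
      norm_num
  have hYeq : ∀ l ω, auxY V l ω = (4:ℝ) ^ (-(∑ i ∈ Finset.Icc 1 l, V i ω)) := by
    intro l ω
    rw [← Finset.sum_neg_distrib, Real.rpow_sum_of_pos (by norm_num : (0:ℝ) < 4)]
    exact Finset.prod_congr rfl fun i hi => hWeq i (Finset.mem_Icc.mp hi).1 ω
  -- Markov bound for each l
  have hmarkov : ∀ l : ℕ, P {ω | ∑ i ∈ Finset.Icc 1 l, V i ω ≤ 2 - (w:ℝ)}
      ≤ ENNReal.ofReal ((4:ℝ) ^ ((2:ℤ) - (w:ℤ)) * (1/2:ℝ)^l) := by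
    intro l
    set A := {ω | ∑ i ∈ Finset.Icc 1 l, V i ω ≤ 2 - (w:ℝ)} with hA_def
    have hAm : MeasurableSet A := by
      refine measurableSet_le ?_ measurable_const
      exact Finset.measurable_sum _ fun i hi =>
        ((hmeas i (Finset.mem_Icc.mp hi).1).mono (ℱ.le i)).measurable
    set a : ℝ := (4:ℝ) ^ ((w:ℝ) - 2) with ha_def
    have ha : 0 < a := Real.rpow_pos_of_pos (by norm_num) _
    have hpoint : ∀ ω, A.indicator (fun _ => a) ω ≤ auxY V l ω := by
      intro ω
      rw [Set.indicator_apply]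
      split_ifs with hωA
      · rw [hYeq l ω]
        apply Real.rpow_le_rpow_left_iff (x := (4:ℝ)) (by norm_num) |>.mpr
        have : ∑ i ∈ Finset.Icc 1 l, V i ω ≤ 2 - (w:ℝ) := hωA
        linarith
      · exact auxY_nonneg V l ω
    have hint : (P A).toReal * a ≤ (1/2:ℝ)^l := by
      have h := integral_mono ((integrable_const a).indicator hAm) (hYI l) hpoint
      rw [integral_indicator_const a hAm, smul_eq_mul] at h
      exact h.trans (hgeom l)
    have hainv : (4:ℝ) ^ ((2:ℤ) - (w:ℤ)) = a⁻¹ := by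
      rw [ha_def, ← Real.rpow_intCast]
      push_cast
      rw [show ((2:ℝ) - w) = -((w:ℝ) - 2) by ring, Real.rpow_neg (by norm_num)]
    have htoReal : (P A).toReal ≤ (4:ℝ) ^ ((2:ℤ) - (w:ℤ)) * (1/2:ℝ)^l := by
      rw [hainv, inv_mul_eq_div, le_div_iff₀ ha]
      linarith [hint]
    calc P A = ENNReal.ofReal (P A).toReal := (ENNReal.ofReal_toReal (measure_ne_top P A)).symm
      _ ≤ ENNReal.ofReal ((4:ℝ) ^ ((2:ℤ) - (w:ℤ)) * (1/2:ℝ)^l) := ENNReal.ofReal_le_ofReal htoReal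
  -- union bound
  have hsetEq : {ω | ∃ l, n ≤ l ∧ ∑ i ∈ Finset.Icc 1 l, V i ω ≤ 2 - (w:ℝ)}
      = ⋃ k : ℕ, {ω | ∑ i ∈ Finset.Icc 1 (n + k), V i ω ≤ 2 - (w:ℝ)} := by
    ext ω
    simp only [Set.mem_setOf_eq, Set.mem_iUnion]
    constructor
    · rintro ⟨l, hl, h⟩
      exact ⟨l - n, by rwa [Nat.add_sub_cancel' hl]⟩
    · rintro ⟨k, h⟩
      exact ⟨n + k, Nat.le_add_right n k, h⟩
  have hofRealnn : (0:ℝ) ≤ (4:ℝ) ^ ((2:ℤ) - (w:ℤ)) := by positivity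
  have hgeomsum : ∑' k : ℕ, ENNReal.ofReal ((1/2:ℝ)^k) = 2 := by
    have h12 : ENNReal.ofReal (1/2 : ℝ) = 2⁻¹ := by
      rw [one_div, ENNReal.ofReal_inv_of_pos (by norm_num)]
      norm_num
    calc ∑' k : ℕ, ENNReal.ofReal ((1/2:ℝ)^k)
        = ∑' k : ℕ, (ENNReal.ofReal (1/2:ℝ))^k := by
          congr 1; funext k; rw [ENNReal.ofReal_pow (by norm_num)]
      _ = (1 - ENNReal.ofReal (1/2:ℝ))⁻¹ := ENNReal.tsum_geometric _
      _ = 2 := by rw [h12]; simp [ENNReal.one_sub_inv_two]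
  rw [hsetEq]
  calc P (⋃ k : ℕ, {ω | ∑ i ∈ Finset.Icc 1 (n + k), V i ω ≤ 2 - (w:ℝ)})
      ≤ ∑' k : ℕ, P {ω | ∑ i ∈ Finset.Icc 1 (n + k), V i ω ≤ 2 - (w:ℝ)} := measure_iUnion_le _
    _ ≤ ∑' k : ℕ, ENNReal.ofReal ((4:ℝ) ^ ((2:ℤ) - (w:ℤ)) * (1/2:ℝ)^(n + k)) :=
        ENNReal.tsum_le_tsum fun k => hmarkov (n + k)
    _ = ∑' k : ℕ, ENNReal.ofReal ((4:ℝ) ^ ((2:ℤ) - (w:ℤ)) * (1/2:ℝ)^n) *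
          ENNReal.ofReal ((1/2:ℝ)^k) := by
        congr 1; funext k
        rw [← ENNReal.ofReal_mul (by positivity), pow_add]
        ring_nf
    _ = ENNReal.ofReal ((4:ℝ) ^ ((2:ℤ) - (w:ℤ)) * (1/2:ℝ)^n) *
          ∑' k : ℕ, ENNReal.ofReal ((1/2:ℝ)^k) := ENNReal.tsum_mul_left
    _ = ENNReal.ofReal ((4:ℝ) ^ ((2:ℤ) - (w:ℤ)) * (1/2:ℝ)^n) * ENNReal.ofReal 2 := by
        rw [hgeomsum]; norm_num
    _ = ENNReal.ofReal ((4 : ℝ) ^ ((2 : ℤ) - (w : ℤ)) * (2 : ℝ) ^ (1 - (n : ℤ))) := by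
        rw [← ENNReal.ofReal_mul (by positivity)]
        congr 1
        have : (2:ℝ) ^ ((1:ℤ) - (n:ℤ)) = 2 / (2:ℝ)^n := by
          rw [zpow_sub₀ (by norm_num : (2:ℝ) ≠ 0), zpow_one, zpow_natCast]
        rw [this, one_div, inv_pow]
        field_simp
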